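/- arXiv:1011.4633 — 7 statements merged into one kernel-verified Lean document; each statement's English description precedes it below -/
import Mathlib

section
/- Let n, k, q be real constants with q ≠ 0 and set p = -2/q. Suppose G, H : ℝ × (0,∞) → ℝ are C¹ functions satisfying the second scaling-group resolving equation G − (p+n−2)H + p v H_v + 2x H_x − H H_v = k v^{q+1} for all x ∈ ℝ and v > 0. If u : D → (0,∞) is a C² function on an open domain D ⊆ ℝ × (0,∞) satisfying the parametric first-order equations u_t = r^{p-2} G(t/r², u/r^p) and u_r = r^{p-1} H(t/r², u/r^p) on D, then u is a solution of the semilinear radial heat equation u_t = u_rr + (n-1) r⁻¹ u_r + k u^{q+1} on D. -/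
noncomputable section

def pdt (u : ℝ × ℝ → ℝ) (p : ℝ × ℝ) : ℝ := deriv (fun s => u (s, p.2)) p.1

def pdr (u : ℝ × ℝ → ℝ) (p : ℝ × ℝ) : ℝ := deriv (fun s => u (p.1, s)) p.2

def pdrr (u : ℝ × ℝ → ℝ) (p : ℝ × ℝ) : ℝ :=
  deriv (fun s => deriv (fun s' => u (p.1, s')) s) p.2

/-- The semilinear radial heat equation `u_t = u_rr + (n-1) r⁻¹ u_r + k u^(q+1)`. -/
def HeatEq (n k q : ℝ) (u : ℝ × ℝ → ℝ) (p : ℝ × ℝ) : Prop :=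
  pdt u p = pdrr u p + (n - 1) * (p.2)⁻¹ * pdr u p + k * u p ^ (q + 1)

/-- if `(G,H)` satisfies the second scaling-group resolving equation
and a positive `C²` function `u` satisfies the parametric first-order equations
`u_t = r^(m-2) G(t/r², u/r^m)`, `u_r = r^(m-1) H(t/r², u/r^m)` (with `m = -2/q`),
then `u` solves the semilinear radial heat equation. -/
theorem group_resolving_to_heat (n k q m : ℝ) (hq : q ≠ 0) (hm : m = -2 / q)
    (G H : ℝ → ℝ → ℝ)
    (hG : ContDiffOn ℝ 1 (fun p : ℝ × ℝ => G p.1 p.2) {p : ℝ × ℝ | 0 < p.2})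
    (hH : ContDiffOn ℝ 1 (fun p : ℝ × ℝ => H p.1 p.2) {p : ℝ × ℝ | 0 < p.2})
    (heq2 : ∀ x : ℝ, ∀ v : ℝ, 0 < v →
      G x v - (m + n - 2) * H x v + m * v * deriv (H x) v
        + 2 * x * deriv (fun y => H y v) x - H x v * deriv (H x) v = k * v ^ (q + 1))
    (D : Set (ℝ × ℝ)) (hD : IsOpen D) (hDpos : ∀ p ∈ D, 0 < p.2)
    (u : ℝ × ℝ → ℝ) (hu : ContDiffOn ℝ 2 u D) (hupos : ∀ p ∈ D, 0 < u p)
    (hut : ∀ p ∈ D, pdt u p = p.2 ^ (m - 2) * G (p.1 / p.2 ^ 2) (u p / p.2 ^ m))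
    (hur : ∀ p ∈ D, pdr u p = p.2 ^ (m - 1) * H (p.1 / p.2 ^ 2) (u p / p.2 ^ m)) :
    ∀ p ∈ D, HeatEq n k q u p := by
  rintro ⟨t, r⟩ hp
  have hr : 0 < r := hDpos _ hp
  have hup : 0 < u (t, r) := hupos _ hp
  have hrm : (0:ℝ) < r ^ m := Real.rpow_pos_of_pos hr m
  have hv₀pos : 0 < u (t, r) / r ^ m := div_pos hup hrm
  -- the 2-variable function F = H and its Fréchet derivative L at (x₀, v₀)
  have hopen : IsOpen {p : ℝ × ℝ | 0 < p.2} := isOpen_lt continuous_const continuous_snd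
  have hFd : DifferentiableAt ℝ (fun p : ℝ × ℝ => H p.1 p.2) (t / r ^ 2, u (t, r) / r ^ m) :=
    (hH.contDiffAt (hopen.mem_nhds hv₀pos)).differentiableAt one_ne_zero
  set L := fderiv ℝ (fun p : ℝ × ℝ => H p.1 p.2) (t / r ^ 2, u (t, r) / r ^ m) with hLdef
  have hL : HasFDerivAt (fun p : ℝ × ℝ => H p.1 p.2) L (t / r ^ 2, u (t, r) / r ^ m) :=
    hFd.hasFDerivAt
  -- partial derivatives of H
  have hHx1 : deriv (fun y => H y (u (t, r) / r ^ m)) (t / r ^ 2) = L (1, 0) := by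
    have h1 : HasDerivAt (fun y : ℝ => (y, u (t, r) / r ^ m)) ((1:ℝ), (0:ℝ)) (t / r ^ 2) :=
      (hasDerivAt_id _).prodMk (hasDerivAt_const _ _)
    have h2 := hL.comp_hasDerivAt (t / r ^ 2) h1
    exact h2.deriv
  have hHv1 : deriv (H (t / r ^ 2)) (u (t, r) / r ^ m) = L (0, 1) := by
    have h1 : HasDerivAt (fun v : ℝ => ((t / r ^ 2 : ℝ), v)) ((0:ℝ), (1:ℝ)) (u (t, r) / r ^ m) :=
      (hasDerivAt_const _ _).prodMk (hasDerivAt_id _)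
    have h2 := hL.comp_hasDerivAt (u (t, r) / r ^ m) h1
    exact h2.deriv
  -- derivative of s ↦ t / s²
  have hA : HasDerivAt (fun s : ℝ => t / s ^ 2) (-(2 * t) / r ^ 3) r := by
    have h := (hasDerivAt_const r t).div (hasDerivAt_pow 2 r) (pow_ne_zero 2 hr.ne')
    refine h.congr_deriv ?_
    field_simp
    ring
  -- derivative of s ↦ u (t, s)
  have hU : HasDerivAt (fun s => u (t, s)) (pdr u (t, r)) r := by
    have hud : DifferentiableAt ℝ u (t, r) :=
      (hu.contDiffAt (hD.mem_nhds hp)).differentiableAt (by norm_num)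
    have hdu : DifferentiableAt ℝ (fun s => u (t, s)) r :=
      hud.comp r ((differentiableAt_const t).prodMk differentiableAt_id)
    exact hdu.hasDerivAt
  have hrmD : HasDerivAt (fun s : ℝ => s ^ m) (m * r ^ (m - 1)) r :=
    Real.hasDerivAt_rpow_const (Or.inl hr.ne')
  have hB : HasDerivAt (fun s => u (t, s) / s ^ m)
      ((pdr u (t, r) * r ^ m - u (t, r) * (m * r ^ (m - 1))) / (r ^ m) ^ 2) r :=
    hU.div hrmD hrm.ne'
  have hAB : HasDerivAt (fun s => ((t / s ^ 2 : ℝ), u (t, s) / s ^ m))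
      (-(2 * t) / r ^ 3, (pdr u (t, r) * r ^ m - u (t, r) * (m * r ^ (m - 1))) / (r ^ m) ^ 2) r :=
    hA.prodMk hB
  have hcomp : HasDerivAt (fun s => H (t / s ^ 2) (u (t, s) / s ^ m))
      (L (-(2 * t) / r ^ 3,
        (pdr u (t, r) * r ^ m - u (t, r) * (m * r ^ (m - 1))) / (r ^ m) ^ 2)) r :=
    by have := hL.comp_hasDerivAt r hAB; exact this
  have hLsum : ∀ a' b' : ℝ, L (a', b') = a' * L (1, 0) + b' * L (0, 1) := by
    intro a' b'
    have h : (a', b') = a' • ((1:ℝ), (0:ℝ)) + b' • ((0:ℝ), (1:ℝ)) := by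
      simp [Prod.ext_iff]
    rw [h, map_add, map_smul, map_smul, smul_eq_mul, smul_eq_mul]
  -- derivative of ψ(s) = s^(m-1) * H(t/s², u(t,s)/s^m)
  have hψ : HasDerivAt (fun s : ℝ => s ^ (m - 1) * H (t / s ^ 2) (u (t, s) / s ^ m))
      ((m - 1) * r ^ (m - 1 - 1) * H (t / r ^ 2) (u (t, r) / r ^ m)
        + r ^ (m - 1) * (L (-(2 * t) / r ^ 3,
            (pdr u (t, r) * r ^ m - u (t, r) * (m * r ^ (m - 1))) / (r ^ m) ^ 2))) r :=
    (Real.hasDerivAt_rpow_const (Or.inl hr.ne')).mul hcomp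
  -- identify pdrr with ψ'
  have hmem : {s : ℝ | (t, s) ∈ D} ∈ nhds r := by
    have hc : ContinuousAt (fun s : ℝ => ((t : ℝ), s)) r :=
      (continuous_const.prodMk continuous_id).continuousAt
    exact hc.preimage_mem_nhds (hD.mem_nhds hp)
  have hev : (fun s => deriv (fun s' => u (t, s')) s)
      =ᶠ[nhds r] (fun s : ℝ => s ^ (m - 1) * H (t / s ^ 2) (u (t, s) / s ^ m)) := by
    filter_upwards [hmem] with s hs
    exact hur (t, s) hs
  have hpdrr : pdrr u (t, r)
      = (m - 1) * r ^ (m - 1 - 1) * H (t / r ^ 2) (u (t, r) / r ^ m)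
        + r ^ (m - 1) * (L (-(2 * t) / r ^ 3,
            (pdr u (t, r) * r ^ m - u (t, r) * (m * r ^ (m - 1))) / (r ^ m) ^ 2)) :=
    hev.deriv_eq.trans hψ.deriv
  -- equation from heq2
  have heq := heq2 (t / r ^ 2) (u (t, r) / r ^ m) hv₀pos
  rw [hHx1, hHv1] at heq
  have hGval : G (t / r ^ 2) (u (t, r) / r ^ m)
      = (m + n - 2) * H (t / r ^ 2) (u (t, r) / r ^ m)
        - m * (u (t, r) / r ^ m) * L (0, 1)
        - 2 * (t / r ^ 2) * L (1, 0)
        + H (t / r ^ 2) (u (t, r) / r ^ m) * L (0, 1)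
        + k * (u (t, r) / r ^ m) ^ (q + 1) := by linarith
  -- rpow identities
  have e1 : r ^ (m - 1) = r ^ m / r := by
    rw [Real.rpow_sub hr, Real.rpow_one]
  have e0 : r ^ (m - 2) = r ^ m / (r * r) := by
    rw [Real.rpow_sub hr, show (2:ℝ) = ((2:ℕ):ℝ) by norm_num, Real.rpow_natCast, pow_two]
  have e2 : r ^ (m - 1 - 1) = r ^ m / (r * r) := by
    rw [show m - 1 - 1 = m - 2 by ring, Real.rpow_sub hr,
      show (2:ℝ) = ((2:ℕ):ℝ) by norm_num, Real.rpow_natCast, pow_two]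
  have hmq : m * (q + 1) = m - 2 := by
    rw [hm]; field_simp; ring
  have e3 : u (t, r) ^ (q + 1) = (u (t, r) / r ^ m) ^ (q + 1) * (r ^ m / (r * r)) := by
    rw [Real.div_rpow hup.le hrm.le]
    rw [show (r ^ m) ^ (q + 1) = r ^ (m - 2) by
      rw [← Real.rpow_mul hr.le, hmq]]
    rw [Real.rpow_sub hr, show (2:ℝ) = ((2:ℕ):ℝ) by norm_num, Real.rpow_natCast, pow_two]
    field_simp
  -- finish
  show pdt u (t, r) = pdrr u (t, r) + (n - 1) * r⁻¹ * pdr u (t, r) + k * u (t, r) ^ (q + 1)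
  rw [hpdrr, hut (t, r) hp, hur (t, r) hp, hLsum, hGval, e0, e1, e2, e3]
  have hrr : r ≠ 0 := hr.ne'
  have hrm' : r ^ m ≠ 0 := hrm.ne'
  field_simp
  ring
end
end

section
/- Let n, k, q be real constants with q ≠ 0 and set p = -2/q. Suppose G, H : ℝ × (0,∞) → ℝ are C¹ functions satisfying the similarity relation H(x,v) + 2x G(x,v) = p v for all x ∈ ℝ and v > 0. Then: (a) the pair (G,H) identically satisfies the first scaling-group resolving equation (p−2)G − p v G_v − 2x G_x − H_x + H G_v − G H_v = 0; and (b) the pair (G,H) satisfies the second scaling-group resolving equation G − (p+n−2)H + p v H_v + 2x H_x − H H_v = k v^{q+1} if and only if G satisfies −4x²(G_x + G G_v) + (1 + 2(2p+n−4)x) G = p(p+n−2) v + k v^{q+1} for all x ∈ ℝ and v > 0. -/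
noncomputable section

/-- for a pair `(G,H)` satisfying the similarity relation
`H + 2xG = mv` (with `m = -2/q`): (a) the first scaling-group resolving
equation holds identically, and (b) the second resolving equation holds iff
`G` satisfies the reduced first-order PDE. -/
theorem similarity_relation_resolving (n k q m : ℝ) (hq : q ≠ 0) (hm : m = -2 / q)
    (G H : ℝ → ℝ → ℝ)
    (hG : ContDiffOn ℝ 1 (fun p : ℝ × ℝ => G p.1 p.2) {p : ℝ × ℝ | 0 < p.2})
    (hH : ContDiffOn ℝ 1 (fun p : ℝ × ℝ => H p.1 p.2) {p : ℝ × ℝ | 0 < p.2})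
    (hrel : ∀ x : ℝ, ∀ v : ℝ, 0 < v → H x v + 2 * x * G x v = m * v) :
    (∀ x : ℝ, ∀ v : ℝ, 0 < v →
      (m - 2) * G x v - m * v * deriv (G x) v - 2 * x * deriv (fun y => G y v) x
        - deriv (fun y => H y v) x + H x v * deriv (G x) v - G x v * deriv (H x) v = 0)
    ∧ ((∀ x : ℝ, ∀ v : ℝ, 0 < v →
        G x v - (m + n - 2) * H x v + m * v * deriv (H x) v
          + 2 * x * deriv (fun y => H y v) x - H x v * deriv (H x) v = k * v ^ (q + 1))
      ↔ (∀ x : ℝ, ∀ v : ℝ, 0 < v →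
        -(4 * x ^ 2) * (deriv (fun y => G y v) x + G x v * deriv (G x) v)
          + (1 + 2 * (2 * m + n - 4) * x) * G x v
          = m * (m + n - 2) * v + k * v ^ (q + 1))) := by

  have hopen : IsOpen {p : ℝ × ℝ | (0:ℝ) < p.2} := isOpen_lt continuous_const continuous_snd
  have key : ∀ x v : ℝ, 0 < v →
      H x v = m * v - 2 * x * G x v ∧
      deriv (H x) v = m * 1 - 2 * x * deriv (G x) v ∧
      deriv (fun y => H y v) x
        = 0 - (2 * 1 * G x v + 2 * x * deriv (fun y => G y v) x) := by
    intro x v hv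
    have hGd : DifferentiableAt ℝ (fun p : ℝ × ℝ => G p.1 p.2) (x, v) :=
      ((hG.contDiffAt (hopen.mem_nhds (show ((x, v) : ℝ × ℝ) ∈ _ from hv))).differentiableAt
        one_ne_zero)
    have hGv : DifferentiableAt ℝ (G x) v :=
      hGd.comp v ((differentiableAt_const x).prodMk differentiableAt_id)
    have hGx : DifferentiableAt ℝ (fun y => G y v) x :=
      by have := hGd.comp x ((differentiableAt_id : DifferentiableAt ℝ id x).prodMk (differentiableAt_const v)); exact this
    refine ⟨by have := hrel x v hv; linarith, ?_, ?_⟩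
    · have hev : H x =ᶠ[nhds v] fun w => m * w - 2 * x * G x w := by
        filter_upwards [Ioi_mem_nhds hv] with w hw
        have := hrel x w hw; linarith
      have h2 : HasDerivAt (fun w => m * w - 2 * x * G x w)
          (m * 1 - 2 * x * deriv (G x) v) v :=
        ((hasDerivAt_id v).const_mul m).sub (hGv.hasDerivAt.const_mul (2 * x))
      exact hev.deriv_eq.trans h2.deriv
    · have hfun : (fun y => H y v) = fun y => m * v - 2 * y * G y v :=
        funext fun y => by have := hrel y v hv; linarith
      have h1 : HasDerivAt (fun y => m * v - 2 * y * G y v)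
          (0 - (2 * 1 * G x v + 2 * x * deriv (fun y => G y v) x)) x :=
        (hasDerivAt_const x (m * v)).sub
          (((hasDerivAt_id x).const_mul 2).mul hGx.hasDerivAt)
      rw [hfun]; exact h1.deriv
  constructor
  · intro x v hv
    obtain ⟨h0, h2, h1⟩ := key x v hv
    rw [h0, h1, h2]; ring
  · constructor
    · intro h x v hv
      obtain ⟨h0, h2, h1⟩ := key x v hv
      have h' := h x v hv
      rw [h0, h1, h2] at h'
      linear_combination h'
    · intro h x v hv
      obtain ⟨h0, h2, h1⟩ := key x v hv
      have h' := h x v hv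
      rw [h0, h1, h2]
      linear_combination h'
end
end

section
/- Let n, k, q be real constants with q ≠ 0 and q ≠ -1, and set p = -2/q. Then the pair of functions G(x,v) = k v^{q+1}, H(x,v) = 0 satisfies both equations of the scaling-group resolving system, namely (p−2)G − p v G_v − 2x G_x − H_x + H G_v − G H_v = 0 and G − (p+n−2)H + p v H_v + 2x H_x − H H_v = k v^{q+1}, for all x ∈ ℝ and v > 0. -/
noncomputable section

/-- First equation of the scaling-group resolving system at `(x,v)`,
with `m = -2/q` the scaling weight. -/
def Resolving1 (m : ℝ) (G H : ℝ → ℝ → ℝ) (x v : ℝ) : Prop :=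
  (m - 2) * G x v - m * v * deriv (G x) v - 2 * x * deriv (fun y => G y v) x
    - deriv (fun y => H y v) x + H x v * deriv (G x) v - G x v * deriv (H x) v = 0

/-- Second equation of the scaling-group resolving system at `(x,v)`. -/
def Resolving2 (n k q m : ℝ) (G H : ℝ → ℝ → ℝ) (x v : ℝ) : Prop :=
  G x v - (m + n - 2) * H x v + m * v * deriv (H x) v
    + 2 * x * deriv (fun y => H y v) x - H x v * deriv (H x) v = k * v ^ (q + 1)

/-- `G = k v^(q+1)`, `H = 0` solves the scaling-group resolving system. -/
theorem resolving_solution_one_term (n k q m : ℝ) (hq : q ≠ 0) (hq1 : q ≠ -1)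
    (hm : m = -2 / q) (G H : ℝ → ℝ → ℝ)
    (hG : ∀ x v : ℝ, G x v = k * v ^ (q + 1))
    (hH : ∀ x v : ℝ, H x v = 0) :
    ∀ x : ℝ, ∀ v : ℝ, 0 < v → Resolving1 m G H x v ∧ Resolving2 n k q m G H x v := by
  intro x v hv
  have hGx : ∀ x : ℝ, G x = fun w => k * w ^ (q + 1) := fun x => funext (hG x)
  have hHx : ∀ x : ℝ, H x = fun _ => 0 := fun x => funext (hH x)
  -- derivative in v of G x
  have hdGv : deriv (G x) v = k * ((q + 1) * v ^ q) := by
    rw [hGx x, deriv_const_mul]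
    · congr 1
      have := Real.deriv_rpow_const (x := v) (p := q + 1)
      rw [this]
      ring_nf
    · exact (Real.hasDerivAt_rpow_const (Or.inl (ne_of_gt hv))).differentiableAt
  have hdGx : deriv (fun y => G y v) x = 0 := by
    have : (fun y => G y v) = fun _ => k * v ^ (q + 1) := funext fun y => hG y v
    rw [this, deriv_const]
  have hdHx : deriv (fun y => H y v) x = 0 := by
    have : (fun y => H y v) = fun _ => (0 : ℝ) := funext fun y => hH y v
    rw [this, deriv_const]
  have hdHv : deriv (H x) v = 0 := by rw [hHx x]; simp
  have hvpow : v * v ^ q = v ^ (q + 1) := by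
    rw [Real.rpow_add hv, Real.rpow_one]; ring
  constructor
  · unfold Resolving1
    rw [hdGv, hdGx, hdHx, hdHv, hG, hH]
    have : m * v * (k * ((q + 1) * v ^ q)) = m * (q + 1) * k * (v * v ^ q) := by ring
    rw [this, hvpow, hm]
    field_simp
    ring
  · unfold Resolving2
    rw [hdHv, hdHx, hG, hH]
    ring
end
end

section
/- Let n, k be real constants with n ∉ {1, 2, 3, 4}, let q = 2/(2−n) (so q ≠ 0, and assume q ≠ -1, i.e. n ≠ 4), set p = n−2, and assume −k(n−2)/(n−3) > 0. Then for each choice of sign ε ∈ {1, −1}, the pair of functions G(x,v) = ε(4−n)·√(−k(n−2)/(n−3))·v^{(n−3)/(n−2)} and H(x,v) = G(x,v)/(4−n) + (2−n)v satisfies both equations of the scaling-group resolving system, (p−2)G − p v G_v − 2x G_x − H_x + H G_v − G H_v = 0 and G − (p+n−2)H + p v H_v + 2x H_x − H H_v = k v^{q+1}, for all x ∈ ℝ and v > 0. -/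
noncomputable section

/-- the two-term solution of the scaling-group resolving system
for `q = 2/(2-n)`, `m = n-2`, `n ∉ {1,2,3,4}`. -/
theorem resolving_solution_two_term (n k q m e : ℝ)
    (hn1 : n ≠ 1) (hn2 : n ≠ 2) (hn3 : n ≠ 3) (hn4 : n ≠ 4)
    (hq : q = 2 / (2 - n)) (hq1 : q ≠ -1) (hm : m = n - 2)
    (hpos : 0 < -k * (n - 2) / (n - 3)) (he : e = 1 ∨ e = -1)
    (G H : ℝ → ℝ → ℝ)
    (hG : ∀ x v : ℝ, G x v
      = e * (4 - n) * Real.sqrt (-k * (n - 2) / (n - 3)) * v ^ ((n - 3) / (n - 2)))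
    (hH : ∀ x v : ℝ, H x v = G x v / (4 - n) + (2 - n) * v) :
    ∀ x : ℝ, ∀ v : ℝ, 0 < v → Resolving1 m G H x v ∧ Resolving2 n k q m G H x v := by
  subst hq hm
  intro x v hv
  have hn2' : n - 2 ≠ 0 := sub_ne_zero.mpr hn2
  have hn3' : n - 3 ≠ 0 := sub_ne_zero.mpr hn3
  have hn4' : (4:ℝ) - n ≠ 0 := sub_ne_zero.mpr (Ne.symm hn4)
  have hn2'' : (2:ℝ) - n ≠ 0 := sub_ne_zero.mpr (Ne.symm hn2)
  set c : ℝ := e * (4 - n) * Real.sqrt (-k * (n - 2) / (n - 3)) with hc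
  set α : ℝ := (n - 3) / (n - 2) with hα
  have hGfun : ∀ y : ℝ, G y = fun w => c * w ^ α := fun y => funext fun w => hG y w
  have hHfun : ∀ y : ℝ, H y = fun w => c / (4 - n) * w ^ α + (2 - n) * w := by
    intro y; funext w; rw [hH, hG]; ring
  have hdG : deriv (G x) v = c * (α * v ^ (α - 1)) := by
    rw [hGfun]
    exact ((Real.hasDerivAt_rpow_const (p := α) (Or.inl hv.ne')).const_mul c).deriv
  have hdH : deriv (H x) v = c / (4 - n) * (α * v ^ (α - 1)) + (2 - n) := by
    rw [hHfun]
    have h1 := (Real.hasDerivAt_rpow_const (p := α) (Or.inl hv.ne')).const_mul (c / (4 - n))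
    have h2 := (hasDerivAt_id v).const_mul (2 - n)
    have h3 := (h1.add h2).deriv; simp only [mul_one] at h3; exact h3
  have hdGx : deriv (fun y => G y v) x = 0 := by
    have : (fun y => G y v) = fun _ => c * v ^ α := funext fun y => hG y v
    rw [this]; exact deriv_const _ _
  have hdHx : deriv (fun y => H y v) x = 0 := by
    have : (fun y => H y v) = fun _ => c / (4 - n) * v ^ α + (2 - n) * v := by
      funext y; rw [hH, hG]; ring
    rw [this]; exact deriv_const _ _
  have hvα : v ^ α = v ^ (α - 1) * v := by
    rw [← Real.rpow_add_one hv.ne' (α - 1)]; norm_num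
  have hst : v ^ (2 / (2 - n) + 1) = v ^ (α - 1) * v ^ (α - 1) * v := by
    have hexp : 2 / (2 - n) + 1 = (α - 1) + ((α - 1) + 1) := by
      rw [hα]; field_simp; ring
    rw [hexp, Real.rpow_add hv, Real.rpow_add hv, Real.rpow_one]; ring
  have hc2 : c * c = (4 - n) * (4 - n) * (-k * (n - 2) / (n - 3)) := by
    have hs : Real.sqrt (-k * (n - 2) / (n - 3)) * Real.sqrt (-k * (n - 2) / (n - 3))
        = -k * (n - 2) / (n - 3) := Real.mul_self_sqrt hpos.le
    rcases he with rfl | rfl <;> rw [hc] <;> nlinarith [hs]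
  constructor
  · unfold Resolving1
    rw [hdG, hdH, hdGx, hdHx, hG, hH, hG, hvα, hα]
    field_simp
    ring
  · unfold Resolving2
    rw [hdH, hdHx, hG, hH, hG, hst, hvα, hα]
    clear_value c
    generalize v ^ ((n - 3) / (n - 2) - 1) = t
    have hk : k = -(c * c) * (n - 3) / ((4 - n) * (4 - n) * (n - 2)) := by
      rw [hc2]; field_simp
    rw [hk]
    field_simp
    ring
end
end

section
/- Let n = 5/2, q = −4, p = 1/2, and let k > 0. Then for each choice of sign ε ∈ {1, −1}, the pair of functions G(x,v) = 3v/(3x+1) + ε·3√k/(2v) and H(x,v) = (2/3)G(x,v) − v/2 satisfies both equations of the scaling-group resolving system, (p−2)G − p v G_v − 2x G_x − H_x + H G_v − G H_v = 0 and G − (p+n−2)H + p v H_v + 2x H_x − H H_v = k v^{q+1}, for all x ≠ −1/3 and v > 0. -/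
noncomputable section

set_option maxHeartbeats 1000000 in
/-- solution of the scaling-group resolving system for
`n = 5/2`, `q = -4`, `m = 1/2`, `k > 0`. -/
theorem resolving_solution_q_neg_four (n k q m e : ℝ)
    (hn : n = 5 / 2) (hq : q = -4) (hm : m = 1 / 2) (hk : 0 < k)
    (he : e = 1 ∨ e = -1)
    (G H : ℝ → ℝ → ℝ)
    (hG : ∀ x v : ℝ, G x v = 3 * v / (3 * x + 1) + e * (3 * Real.sqrt k) / (2 * v))
    (hH : ∀ x v : ℝ, H x v = (2 / 3) * G x v - v / 2) :
    ∀ x : ℝ, x ≠ -1 / 3 → ∀ v : ℝ, 0 < v →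
      Resolving1 m G H x v ∧ Resolving2 n k q m G H x v := by
  intro x hx v hv
  have hv0 : v ≠ 0 := ne_of_gt hv
  have ha : 3 * x + 1 ≠ 0 := fun h => hx (by linarith)
  set s := Real.sqrt k with hsdef
  have hs : s ^ 2 = k := Real.sq_sqrt hk.le
  have h2v : 2 * v ≠ 0 := by positivity
  -- ∂G/∂v
  have DGv : HasDerivAt (G x)
      (3 * 1 / (3 * x + 1) + (0 * (2 * v) - e * (3 * s) * (2 * 1)) / (2 * v) ^ 2) v := by
    have hfun : G x = fun w => 3 * w / (3 * x + 1) + e * (3 * s) / (2 * w) :=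
      funext fun w => hG x w
    rw [hfun]
    exact (((hasDerivAt_id v).const_mul 3).div_const (3 * x + 1)).add
      ((hasDerivAt_const v (e * (3 * s))).div ((hasDerivAt_id v).const_mul 2) h2v)
  -- ∂G/∂x
  have DGx : HasDerivAt (fun y => G y v)
      ((0 * (3 * x + 1) - 3 * v * (3 * 1)) / (3 * x + 1) ^ 2) x := by
    have hfun : (fun y => G y v) = fun y => 3 * v / (3 * y + 1) + e * (3 * s) / (2 * v) :=
      funext fun y => hG y v
    rw [hfun]
    exact ((hasDerivAt_const x (3 * v)).div
      (((hasDerivAt_id x).const_mul 3).add_const 1) ha).add_const _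
  -- ∂H/∂v
  have DHv : HasDerivAt (H x)
      (2 / 3 * (3 * 1 / (3 * x + 1) + (0 * (2 * v) - e * (3 * s) * (2 * 1)) / (2 * v) ^ 2)
        - 1 / 2) v := by
    have hfun : H x = fun w => 2 / 3 * (G x w) - w / 2 := funext fun w => hH x w
    rw [hfun]
    exact (DGv.const_mul (2 / 3)).sub ((hasDerivAt_id v).div_const 2)
  -- ∂H/∂x
  have DHx : HasDerivAt (fun y => H y v)
      (2 / 3 * ((0 * (3 * x + 1) - 3 * v * (3 * 1)) / (3 * x + 1) ^ 2) - 0) x := by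
    have hfun : (fun y => H y v) = fun y => 2 / 3 * (G y v) - v / 2 :=
      funext fun y => hH y v
    rw [hfun]
    exact (DGx.const_mul (2 / 3)).sub (hasDerivAt_const x (v / 2))
  have hpow : v ^ (q + 1) = (v ^ 3)⁻¹ := by
    rw [hq, show (-4 : ℝ) + 1 = -((3 : ℕ) : ℝ) by norm_num, Real.rpow_neg hv.le,
      Real.rpow_natCast]
  constructor
  · unfold Resolving1
    rw [DGv.deriv, DGx.deriv, DHv.deriv, DHx.deriv, hG, hH, hG, hm]
    rcases he with rfl | rfl <;> (field_simp; ring)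
  · unfold Resolving2
    rw [DHv.deriv, DHx.deriv, hG, hH, hG, hpow, ← hs, hn, hm]
    rcases he with rfl | rfl <;> (field_simp; ring)
end
end

section
/- Let n = 5/2, q = 2, p = −1, and let k < 0. Then for each choice of sign ε ∈ {1, −1}, the pair of functions G(x,v) = 3v(1 + ε√(−2k)·v)/(3x+1) and H(x,v) = (3x+1)G(x,v)/6 − ((3x−1)/(3x+1))·v satisfies both equations of the scaling-group resolving system, (p−2)G − p v G_v − 2x G_x − H_x + H G_v − G H_v = 0 and G − (p+n−2)H + p v H_v + 2x H_x − H H_v = k v^{q+1}, for all x ≠ −1/3 and v > 0. -/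
noncomputable section

/-- solution of the scaling-group resolving system for
`n = 5/2`, `q = 2`, `m = -1`, `k < 0`. -/
theorem resolving_solution_q_two (n k q m e : ℝ)
    (hn : n = 5 / 2) (hq : q = 2) (hm : m = -1) (hk : k < 0)
    (he : e = 1 ∨ e = -1)
    (G H : ℝ → ℝ → ℝ)
    (hG : ∀ x v : ℝ, G x v = 3 * v * (1 + e * Real.sqrt (-2 * k) * v) / (3 * x + 1))
    (hH : ∀ x v : ℝ, H x v = (3 * x + 1) * G x v / 6 - ((3 * x - 1) / (3 * x + 1)) * v) :
    ∀ x : ℝ, x ≠ -1 / 3 → ∀ v : ℝ, 0 < v →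
      Resolving1 m G H x v ∧ Resolving2 n k q m G H x v := by
  intro x hx v hv
  set s := e * Real.sqrt (-2 * k) with hs
  have hA : 3 * x + 1 ≠ 0 := by
    intro h; apply hx; linarith
  have hs2 : s ^ 2 = -2 * k := by
    have h : Real.sqrt (-2 * k) ^ 2 = -2 * k := Real.sq_sqrt (by linarith)
    rcases he with he | he <;> rw [hs, he] <;> nlinarith [h]
  clear_value s
  have hGx : G x = fun w => 3 * w * (1 + s * w) / (3 * x + 1) := funext fun w => hG x w
  have hHx : H x = fun w => w * (1 + s * w) / 2 - (3 * x - 1) / (3 * x + 1) * w := by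
    funext w
    rw [hH, hG]
    field_simp
    ring
  -- v-derivatives
  have dGv : deriv (G x) v = (3 + 6 * s * v) / (3 * x + 1) := by
    rw [hGx]
    have h1 : HasDerivAt (fun w : ℝ => 3 * w * (1 + s * w))
        (3 * (1 + s * v) + 3 * v * s) v := by
      have ha : HasDerivAt (fun w : ℝ => 3 * w) 3 v := by
        simpa using (hasDerivAt_id v).const_mul (3 : ℝ)
      have hb : HasDerivAt (fun w : ℝ => 1 + s * w) s v := by
        simpa using ((hasDerivAt_id v).const_mul s).const_add (1 : ℝ)
      exact ha.mul hb
    rw [(h1.div_const (3 * x + 1)).deriv]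
    ring
  have dHv : deriv (H x) v = (1 + 2 * s * v) / 2 - (3 * x - 1) / (3 * x + 1) := by
    rw [hHx]
    have h1 : HasDerivAt (fun w : ℝ => w * (1 + s * w)) (1 * (1 + s * v) + v * s) v := by
      have hb : HasDerivAt (fun w : ℝ => 1 + s * w) s v := by
        simpa using ((hasDerivAt_id v).const_mul s).const_add (1 : ℝ)
      exact (hasDerivAt_id v).mul hb
    have h2 : HasDerivAt (fun w : ℝ => (3 * x - 1) / (3 * x + 1) * w)
        ((3 * x - 1) / (3 * x + 1)) v := by
      simpa using (hasDerivAt_id v).const_mul ((3 * x - 1) / (3 * x + 1))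
    have h3 : HasDerivAt (fun w : ℝ => w * (1 + s * w) / 2 - (3 * x - 1) / (3 * x + 1) * w)
        ((1 * (1 + s * v) + v * s) / 2 - (3 * x - 1) / (3 * x + 1)) v := (h1.div_const 2).sub h2
    rw [h3.deriv]
    ring
  -- x-derivatives
  have hinv : HasDerivAt (fun y : ℝ => (3 * y + 1)⁻¹) (-(3 / (3 * x + 1) ^ 2)) x := by
    have hb : HasDerivAt (fun y : ℝ => 3 * y + 1) 3 x := by
      simpa using ((hasDerivAt_id x).const_mul (3 : ℝ)).add_const (1 : ℝ)
    rw [show (-(3 / (3 * x + 1) ^ 2)) = -3 / (3 * x + 1) ^ 2 by ring]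
    exact hb.inv hA
  have dGx : deriv (fun y => G y v) x = -(9 * v * (1 + s * v)) / (3 * x + 1) ^ 2 := by
    have heq : (fun y => G y v) = fun y => (3 * v * (1 + s * v)) * (3 * y + 1)⁻¹ := by
      funext y; rw [hG]; ring
    rw [heq, (hinv.const_mul (3 * v * (1 + s * v))).deriv]
    field_simp; ring
  have hfrac : HasDerivAt (fun y : ℝ => (3 * y - 1) / (3 * y + 1))
      ((3 * (3 * x + 1) - (3 * x - 1) * 3) / (3 * x + 1) ^ 2) x := by
    have ha : HasDerivAt (fun y : ℝ => 3 * y - 1) 3 x := by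
      simpa using ((hasDerivAt_id x).const_mul (3 : ℝ)).sub_const (1 : ℝ)
    have hb : HasDerivAt (fun y : ℝ => 3 * y + 1) 3 x := by
      simpa using ((hasDerivAt_id x).const_mul (3 : ℝ)).add_const (1 : ℝ)
    exact ha.div hb hA
  have dHx : deriv (fun y => H y v) x = -(6 * v) / (3 * x + 1) ^ 2 := by
    have hev : (fun y => H y v) =ᶠ[nhds x]
        (fun y => v * (1 + s * v) / 2 - (3 * y - 1) / (3 * y + 1) * v) := by
      have hc : ContinuousAt (fun y : ℝ => 3 * y + 1) x := by fun_prop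
      filter_upwards [hc.eventually_ne hA] with y hy
      rw [hH, hG]
      field_simp
      ring
    rw [hev.deriv_eq]
    have h2 : HasDerivAt (fun y : ℝ => v * (1 + s * v) / 2 - (3 * y - 1) / (3 * y + 1) * v)
        (0 - (3 * (3 * x + 1) - (3 * x - 1) * 3) / (3 * x + 1) ^ 2 * v) x :=
      (hasDerivAt_const x _).sub (hfrac.mul_const v)
    rw [h2.deriv]
    field_simp
    ring
  have hGval : G x v = 3 * v * (1 + s * v) / (3 * x + 1) := hG x v
  have hHval : H x v = v * (1 + s * v) / 2 - (3 * x - 1) / (3 * x + 1) * v :=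
    congrFun hHx v
  constructor
  · unfold Resolving1
    rw [dGv, dHv, dGx, dHx, hGval, hHval, hm]
    field_simp
    ring
  · unfold Resolving2
    rw [dHv, dHx, hGval, hHval, hm, hn, hq]
    rw [show (2 : ℝ) + 1 = ((3 : ℕ) : ℝ) by norm_num, Real.rpow_natCast]
    field_simp
    linear_combination (-2 * v ^ 2 * (3 * x + 1) ^ 2) * hs2
end
end

section
/- Let n > 4 and k < 0 be real constants, let q = 2/(2−n) (so q+1 = (n−4)/(n−2)), let c ∈ ℝ, and fix a sign ε ∈ {1, −1}. Define w(t,r) = ε·√(−k/((n−2)(n−3)))·(r/2 − (n−4)(t+c)/r). Then u(t,r) = w(t,r)^{n−2} is a positive solution of the semilinear radial heat equation u_t = u_rr + (n-1) r⁻¹ u_r + k u^{q+1} on any open subset of {(t,r) : r > 0, w(t,r) > 0}, where all non-integer powers are real powers of positive quantities. -/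
noncomputable section

/-- the exact solution `u = w^(n-2)` with
`w(t,r) = ε √(-k/((n-2)(n-3))) (r/2 - (n-4)(t+c)/r)`, for `n > 4`, `k < 0`,
`q = 2/(2-n)`. -/
theorem exact_solution_power (n k q c e : ℝ) (hn : 4 < n) (hk : k < 0)
    (hq : q = 2 / (2 - n)) (he : e = 1 ∨ e = -1)
    (D : Set (ℝ × ℝ)) (hD : IsOpen D)
    (hDsub : D ⊆ {p : ℝ × ℝ | 0 < p.2 ∧
      0 < e * Real.sqrt (-k / ((n - 2) * (n - 3)))
            * (p.2 / 2 - (n - 4) * (p.1 + c) / p.2)}) :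
    ∀ p ∈ D,
      0 < (fun p : ℝ × ℝ =>
          (e * Real.sqrt (-k / ((n - 2) * (n - 3)))
            * (p.2 / 2 - (n - 4) * (p.1 + c) / p.2)) ^ (n - 2)) p ∧
      HeatEq n k q (fun p : ℝ × ℝ =>
          (e * Real.sqrt (-k / ((n - 2) * (n - 3)))
            * (p.2 / 2 - (n - 4) * (p.1 + c) / p.2)) ^ (n - 2)) p := by
  intro p hp
  obtain ⟨t, r⟩ := p
  obtain ⟨hr, hw⟩ := hDsub hp
  simp only [Set.mem_setOf_eq] at hw hr
  have hn2 : (0:ℝ) < n - 2 := by linarith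
  have hn3 : (0:ℝ) < n - 3 := by linarith
  have hrne : r ≠ 0 := ne_of_gt hr
  set A := e * Real.sqrt (-k / ((n - 2) * (n - 3))) with hA
  have hA2 : A ^ 2 = -k / ((n - 2) * (n - 3)) := by
    have he2 : e ^ 2 = 1 := by rcases he with h | h <;> rw [h] <;> norm_num
    have hX : 0 ≤ -k / ((n - 2) * (n - 3)) :=
      div_nonneg (by linarith) (mul_pos hn2 hn3).le
    rw [hA, mul_pow, he2, one_mul, Real.sq_sqrt hX]
  have hk2 : k = -(A ^ 2 * ((n - 2) * (n - 3))) := by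
    rw [hA2]; field_simp
  refine ⟨Real.rpow_pos_of_pos hw _, ?_⟩
  simp only [HeatEq, pdt, pdr, pdrr]
  have hexp : n - 2 - 1 = n - 3 := by ring
  have hexp2 : n - 3 - 1 = n - 4 := by ring
  -- t derivative
  have l1 : HasDerivAt (fun s : ℝ => A * (r / 2 - (n - 4) * (s + c) / r))
      (-(A * (n - 4) / r)) t := by
    have h0 : HasDerivAt (fun s : ℝ => (n - 4) * (s + c) / r) ((n - 4) / r) t := by
      have := (((hasDerivAt_id t).add_const c).const_mul (n - 4)).div_const r
      simpa using this
    have := (h0.const_sub (r / 2)).const_mul A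
    exact this.congr_deriv (by ring)
  have hdt := l1.rpow_const (p := n - 2) (Or.inl hw.ne')
  -- r derivative of w, at any s ≠ 0
  have lwr : ∀ s : ℝ, s ≠ 0 → HasDerivAt (fun x : ℝ => A * (x / 2 - (n - 4) * (t + c) / x))
      (A * (1 / 2 + (n - 4) * (t + c) / s ^ 2)) s := by
    intro s hs
    have h0 : HasDerivAt (fun x : ℝ => (n - 4) * (t + c) / x)
        (-((n - 4) * (t + c) / s ^ 2)) s := by
      have := (hasDerivAt_const s ((n - 4) * (t + c))).div (hasDerivAt_id s) hs
      exact this.congr_deriv (by simp only [id]; ring)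
    have h1 : HasDerivAt (fun x : ℝ => x / 2) (1 / 2 : ℝ) s := by
      simpa using (hasDerivAt_id s).div_const 2
    have := (h1.sub h0).const_mul A
    exact this.congr_deriv (by ring)
  have hu_r : ∀ s : ℝ, s ≠ 0 → 0 < A * (s / 2 - (n - 4) * (t + c) / s) →
      HasDerivAt (fun x : ℝ => (A * (x / 2 - (n - 4) * (t + c) / x)) ^ (n - 2))
        (A * (1 / 2 + (n - 4) * (t + c) / s ^ 2) * (n - 2)
          * (A * (s / 2 - (n - 4) * (t + c) / s)) ^ (n - 2 - 1)) s :=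
    fun s hs hws => (lwr s hs).rpow_const (p := n - 2) (Or.inl hws.ne')
  -- second derivative : eventual equality
  have hev : (fun s => deriv (fun s' => (A * (s' / 2 - (n - 4) * (t + c) / s')) ^ (n - 2)) s)
      =ᶠ[nhds r] (fun s => A * (1 / 2 + (n - 4) * (t + c) / s ^ 2) * (n - 2)
          * (A * (s / 2 - (n - 4) * (t + c) / s)) ^ (n - 3)) := by
    have hU : IsOpen {s : ℝ | (t, s) ∈ D} := hD.preimage (Continuous.prodMk_right t)
    filter_upwards [hU.mem_nhds (show (t, r) ∈ D from hp)] with s hs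
    obtain ⟨hs0, hws⟩ := hDsub hs
    rw [(hu_r s (ne_of_gt hs0) hws).deriv, hexp]
  have hM2 : HasDerivAt (fun s : ℝ => (n - 4) * (t + c) / s ^ 2)
      (-2 * ((n - 4) * (t + c)) / r ^ 3) r := by
    have := (hasDerivAt_const r ((n - 4) * (t + c))).div (hasDerivAt_pow 2 r)
      (pow_ne_zero 2 hrne)
    exact this.congr_deriv (by field_simp; ring)
  have hg := (((hM2.const_add (1 / 2 : ℝ)).const_mul A).mul_const (n - 2)).mul
    ((lwr r hrne).rpow_const (p := n - 3) (Or.inl hw.ne'))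
  rw [hdt.deriv, hev.deriv_eq, (show HasDerivAt (fun s => A * (1 / 2 + (n - 4) * (t + c) / s ^ 2) * (n - 2) * (A * (s / 2 - (n - 4) * (t + c) / s)) ^ (n - 3)) _ r from hg).deriv, (hu_r r hrne hw).deriv, hexp, hexp2]
  -- the nonlinear term
  have hq1 : q + 1 = (n - 4) / (n - 2) := by
    have h2n : (2:ℝ) - n ≠ 0 := by linarith
    rw [hq]; field_simp; ring
  have hupow : ((A * (r / 2 - (n - 4) * (t + c) / r)) ^ (n - 2)) ^ (q + 1)
      = (A * (r / 2 - (n - 4) * (t + c) / r)) ^ (n - 4) := by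
    rw [hq1, ← Real.rpow_mul hw.le]
    congr 1
    field_simp
  rw [hupow]
  have hW3 : (A * (r / 2 - (n - 4) * (t + c) / r)) ^ (n - 3)
      = (A * (r / 2 - (n - 4) * (t + c) / r)) ^ (n - 4)
        * (A * (r / 2 - (n - 4) * (t + c) / r)) := by
    rw [show n - 3 = n - 4 + 1 by ring, Real.rpow_add hw, Real.rpow_one]
  rw [hW3, hk2]
  field_simp
  ring
end
end
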